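/- Let G be the H-join of graphs G_1,…,G_p, where H has vertex set {1,…,p}. If μ is an eigenvalue of G_i and u is an eigenvector of A(G_i) for μ with jᵀu = 0 (the sum of entries of u is zero), then the vector obtained by placing u in the block of coordinates corresponding to G_i and zeros elsewhere is an eigenvector of A(G) with eigenvalue μ. -/

import Mathlib

open Matrix

/-- The `H`-join of the family of graphs `G i`. -/
def SimpleGraph.hJoin {p : ℕ} (H : SimpleGraph (Fin p)) (n : Fin p → ℕ)
    (G : ∀ i, SimpleGraph (Fin (n i))) : SimpleGraph ((i : Fin p) × Fin (n i)) where
  Adj x y := if h : x.1 = y.1 then (G x.1).Adj x.2 (Fin.cast (congrArg n h.symm) y.2)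
             else H.Adj x.1 y.1
  symm := by
    constructor
    rintro ⟨i, a⟩ ⟨k, b⟩ hadj
    dsimp at *
    by_cases h : i = k
    · subst h
      rw [dif_pos rfl] at hadj ⊢
      simpa using ((G i).symm.symm _ _ (by simpa using hadj))
    · rw [dif_neg h] at hadj
      rw [dif_neg (Ne.symm h)]
      exact H.symm.symm _ _ hadj
  loopless := by
    constructor
    rintro ⟨i, a⟩ h
    rw [dif_pos rfl] at h
    simp at h

noncomputable instance {p : ℕ} (H : SimpleGraph (Fin p)) (n : Fin p → ℕ)
    (G : ∀ i, SimpleGraph (Fin (n i))) : DecidableRel (H.hJoin n G).Adj :=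
  Classical.decRel _

/-- If `u` is an eigenvector of `A(G_i)` for `μ` whose entries sum to zero, then
placing `u` in the `i`-th block and zeros elsewhere gives an eigenvector of the
adjacency matrix of the `H`-join, for the same eigenvalue `μ`. -/
theorem hJoin_eigenvector_of_sum_zero {p : ℕ} (H : SimpleGraph (Fin p))
    (n : Fin p → ℕ) (G : ∀ i, SimpleGraph (Fin (n i))) [∀ i, DecidableRel (G i).Adj]
    (i : Fin p) (μ : ℝ) (u : Fin (n i) → ℝ) (hu0 : u ≠ 0)
    (huEig : (G i).adjMatrix ℝ *ᵥ u = μ • u)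
    (huSum : u ⬝ᵥ (fun _ => (1 : ℝ)) = 0)
    (v : ((k : Fin p) × Fin (n k)) → ℝ)
    (hv : ∀ x, v x = if h : x.1 = i then u (Fin.cast (congrArg n h) x.2) else 0) :
    v ≠ 0 ∧ (H.hJoin n G).adjMatrix ℝ *ᵥ v = μ • v := by
  constructor
  · intro h
    obtain ⟨b, hb⟩ := Function.ne_iff.mp hu0
    apply hb
    have := congrFun h ⟨i, b⟩
    rw [Pi.zero_apply] at this
    rw [hv] at this
    simpa using this
  · funext x
    obtain ⟨k, b⟩ := x
    rw [Pi.smul_apply, mulVec, dotProduct, ← Finset.univ_sigma_univ, Finset.sum_sigma]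
    rw [Finset.sum_eq_single i]
    · by_cases hk : k = i
      · subst hk
        have : ∀ c : Fin (n k),
            (H.hJoin n G).adjMatrix ℝ ⟨k, b⟩ ⟨k, c⟩ * v ⟨k, c⟩
              = (G k).adjMatrix ℝ b c * u c := by
          intro c
          rw [hv]
          rw [SimpleGraph.adjMatrix_apply]
          simp only [SimpleGraph.adjMatrix_apply, SimpleGraph.hJoin, dif_pos rfl]
          simp
        rw [Finset.sum_congr rfl fun c _ => this c]
        have h1 : ((G k).adjMatrix ℝ *ᵥ u) b = μ * u b := by
          rw [huEig]; simp
        rw [mulVec, dotProduct] at h1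
        rw [h1, hv]
        simp
      · classical
        have hsum : ∑ c, u c = 0 := by
          simpa [dotProduct] using huSum
        have : ∀ c : Fin (n i),
            (H.hJoin n G).adjMatrix ℝ ⟨k, b⟩ ⟨i, c⟩ * v ⟨i, c⟩
              = (if H.Adj k i then u c else 0) := by
          intro c
          rw [hv]
          rw [SimpleGraph.adjMatrix_apply]
          simp only [SimpleGraph.adjMatrix_apply, SimpleGraph.hJoin, dif_neg hk]
          by_cases hH : H.Adj k i <;> simp [hH]
        rw [Finset.sum_congr rfl fun c _ => this c]
        by_cases hH : H.Adj k i <;> simp [hH, hsum, hv, hk]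
    · intro l _ hl
      apply Finset.sum_eq_zero
      intro c _
      rw [hv]
      simp [hl]
    · intro h
      exact absurd (Finset.mem_univ i) h
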